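/- Let A = diag(d₁,d₂) with |d₁|,|d₂| > 1 integers, q > 0, a ∈ ℤ. Suppose σ ∈ Ξ satisfies ∑_{p ∈ ℤ×qℤ} |σ(x-p)|² = 1 for all x ∈ ℝ², and there is m̃ ∈ X(q,(1-d₁d₂)a) with σ(Ax) = m̃(x)σ(x) for all x. Then the map R: X(q,a) → Ξ, R(F) = σ·F (pointwise product), is an injective C(𝕋²)-module homomorphism satisfying ⟨R(F), R(G)⟩_A = ⟨F,G⟩_A for all F,G ∈ X(q,a), where ⟨F,G⟩_A(s,t) = ∑_{k=0}^{q-1} conj(F(s,t-k))G(s,t-k). -/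

import Mathlib

open ComplexConjugate

noncomputable section

/-- The projective `C(𝕋²)`-module `X(q,a)`. -/
def Xset (q a : ℤ) : Set (ℝ × ℝ → ℂ) :=
  {F | Continuous F ∧ (∀ s t : ℝ, F (s + 1, t) = F (s, t)) ∧
    ∀ s t : ℝ, F (s, t - (q : ℝ)) =
      Complex.exp (2 * Real.pi * Complex.I * (a : ℂ) * (s : ℂ)) * F (s, t)}

/-- Continuous ℤ²-periodic functions on ℝ², i.e. the algebra `C(𝕋²)`. -/
def PerC (f : ℝ × ℝ → ℂ) : Prop :=
  Continuous f ∧ (∀ s t : ℝ, f (s + 1, t) = f (s, t)) ∧ ∀ s t : ℝ, f (s, t + 1) = f (s, t)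

/-- The ℤ²-periodization of the square modulus. -/
def perSum2 (ξ : ℝ × ℝ → ℂ) (x : ℝ × ℝ) : ℝ :=
  ∑' p : ℤ × ℤ, ‖ξ (x.1 - (p.1 : ℝ), x.2 - (p.2 : ℝ))‖ ^ 2

/-- Membership in the module Ξ over `C(𝕋²)`. -/
def InXi2 (ξ : ℝ × ℝ → ℂ) : Prop :=
  Continuous ξ ∧ (∃ M, ∀ x, ‖ξ x‖ ≤ M) ∧
  (∀ x : ℝ × ℝ, Summable fun p : ℤ × ℤ => ‖ξ (x.1 - (p.1 : ℝ), x.2 - (p.2 : ℝ))‖ ^ 2) ∧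
  (∃ K, ∀ x, perSum2 ξ x ≤ K) ∧ Continuous (perSum2 ξ)

/-- The `C(𝕋²)`-valued inner product on Ξ: the ℤ²-periodization of conj(ξ)·η. -/
def innerA2 (ξ η : ℝ × ℝ → ℂ) (x : ℝ × ℝ) : ℂ :=
  ∑' p : ℤ × ℤ, conj (ξ (x.1 - (p.1 : ℝ), x.2 - (p.2 : ℝ))) * η (x.1 - (p.1 : ℝ), x.2 - (p.2 : ℝ))

lemma xset_shift1 {q a : ℤ} {F : ℝ × ℝ → ℂ} (hF : F ∈ Xset q a) (n : ℤ) (s t : ℝ) :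
    F (s - (n : ℝ), t) = F (s, t) := by
  have hper : Function.Periodic (fun s => F (s, t)) 1 := fun x => hF.2.1 x t
  simpa using hper.sub_int_mul_eq (x := s) n

lemma exp_unimod (a : ℤ) (s : ℝ) :
    ‖Complex.exp (2 * Real.pi * Complex.I * (a : ℂ) * (s : ℂ))‖ = 1 := by
  have h : (2 * (Real.pi : ℂ) * Complex.I * (a : ℂ) * (s : ℂ))
      = ((2 * Real.pi * a * s : ℝ) : ℂ) * Complex.I := by push_cast; ring
  rw [h, Complex.norm_exp_ofReal_mul_I]

lemma xset_shift2 {q a : ℤ} {F : ℝ × ℝ → ℂ} (hF : F ∈ Xset q a) (m : ℤ) (s t : ℝ) :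
    F (s, t - (q : ℝ) * (m : ℝ)) =
      Complex.exp (2 * Real.pi * Complex.I * (a : ℂ) * (s : ℂ)) ^ m * F (s, t) := by
  set e := Complex.exp (2 * Real.pi * Complex.I * (a : ℂ) * (s : ℂ)) with he
  have he0 : e ≠ 0 := Complex.exp_ne_zero _
  induction m using Int.induction_on with
  | zero => simp
  | succ k ih =>
      have step := hF.2.2 s (t - (q : ℝ) * (((k : ℤ) : ℝ)))
      rw [← he] at step
      have h1 : t - (q : ℝ) * ((((k : ℤ) + 1 : ℤ)) : ℝ)
          = t - (q : ℝ) * (((k : ℤ)) : ℝ) - (q : ℝ) := by push_cast; ring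
      rw [h1, step, ih, zpow_add_one₀ he0]
      ring
  | pred k ih =>
      have step := hF.2.2 s (t - (q : ℝ) * ((-(k : ℤ) - 1 : ℤ) : ℝ))
      rw [← he] at step
      have harg : t - (q : ℝ) * ((-(k : ℤ) - 1 : ℤ) : ℝ) - (q : ℝ)
          = t - (q : ℝ) * ((-(k : ℤ) : ℤ) : ℝ) := by push_cast; ring
      rw [harg, ih] at step
      have hkey : F (s, t - (q : ℝ) * ((-(k : ℤ) - 1 : ℤ) : ℝ))
          = e⁻¹ * (e ^ (-(k : ℤ)) * F (s, t)) := by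
        rw [step]; field_simp
      rw [hkey, zpow_sub_one₀ he0]
      ring

lemma exp_conj_pow (a : ℤ) (s : ℝ) (m : ℤ) :
    conj (Complex.exp (2 * Real.pi * Complex.I * (a : ℂ) * (s : ℂ)) ^ m) *
      Complex.exp (2 * Real.pi * Complex.I * (a : ℂ) * (s : ℂ)) ^ m = 1 := by
  set e := Complex.exp (2 * Real.pi * Complex.I * (a : ℂ) * (s : ℂ)) with he
  have h1 : conj e * e = 1 := by
    have := Complex.normSq_eq_conj_mul_self (z := e)
    rw [← this, Complex.normSq_eq_norm_sq, exp_unimod]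
    norm_num
  rw [map_zpow₀, ← mul_zpow, h1, one_zpow]

lemma xset_pair {q a : ℤ} {F G : ℝ × ℝ → ℂ} (hF : F ∈ Xset q a) (hG : G ∈ Xset q a)
    (p₁ m k : ℤ) (s t : ℝ) :
    conj (F (s - (p₁ : ℝ), (t - (k : ℝ)) - (q : ℝ) * (m : ℝ))) *
        G (s - (p₁ : ℝ), (t - (k : ℝ)) - (q : ℝ) * (m : ℝ)) =
      conj (F (s, t - (k : ℝ))) * G (s, t - (k : ℝ)) := by
  rw [xset_shift2 hF m (s - (p₁ : ℝ)) (t - (k : ℝ)), xset_shift2 hG m (s - (p₁ : ℝ)) (t - (k : ℝ)),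
    xset_shift1 hF p₁ s (t - (k : ℝ)), xset_shift1 hG p₁ s (t - (k : ℝ)), map_mul]
  have h := exp_conj_pow a (s - (p₁ : ℝ)) m
  calc conj (Complex.exp (2 * Real.pi * Complex.I * (a : ℂ) * ((s - (p₁ : ℝ) : ℝ) : ℂ)) ^ m) *
        conj (F (s, t - (k : ℝ))) *
        (Complex.exp (2 * Real.pi * Complex.I * (a : ℂ) * ((s - (p₁ : ℝ) : ℝ) : ℂ)) ^ m *
          G (s, t - (k : ℝ)))
      = (conj (Complex.exp (2 * Real.pi * Complex.I * (a : ℂ) * ((s - (p₁ : ℝ) : ℝ) : ℂ)) ^ m) *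
          Complex.exp (2 * Real.pi * Complex.I * (a : ℂ) * ((s - (p₁ : ℝ) : ℝ) : ℂ)) ^ m) *
        (conj (F (s, t - (k : ℝ))) * G (s, t - (k : ℝ))) := by ring
    _ = conj (F (s, t - (k : ℝ))) * G (s, t - (k : ℝ)) := by rw [h, one_mul]

lemma xset_norm_eq {q a : ℤ} {F : ℝ × ℝ → ℂ} (hF : F ∈ Xset q a) (n m : ℤ) (s t : ℝ) :
    ‖F (s - (n : ℝ), t - (q : ℝ) * (m : ℝ))‖ = ‖F (s, t)‖ := by
  rw [xset_shift1 hF n s (t - (q : ℝ) * (m : ℝ)), xset_shift2 hF m s t, norm_mul,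
    show ‖Complex.exp (2 * Real.pi * Complex.I * (a : ℂ) * (s : ℂ)) ^ m‖
      = ‖Complex.exp (2 * Real.pi * Complex.I * (a : ℂ) * (s : ℂ))‖ ^ m from by
        rw [norm_zpow],
    exp_unimod, one_zpow, one_mul]

lemma xset_bounded {q a : ℤ} (hq : 0 < q) {F : ℝ × ℝ → ℂ} (hF : F ∈ Xset q a) :
    ∃ M : ℝ, 0 ≤ M ∧ ∀ x, ‖F x‖ ≤ M := by
  have hcomp : IsCompact (Set.Icc (0:ℝ) 1 ×ˢ Set.Icc (0:ℝ) (q:ℝ)) :=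
    isCompact_Icc.prod isCompact_Icc
  obtain ⟨C, hC⟩ := hcomp.exists_bound_of_continuousOn hF.1.continuousOn
  refine ⟨max C 0, le_max_right _ _, ?_⟩
  rintro ⟨s, t⟩
  have hq' : (0:ℝ) < (q:ℝ) := by exact_mod_cast hq
  set n : ℤ := ⌊s⌋ with hn
  set m : ℤ := ⌊t / (q:ℝ)⌋ with hm
  have h1 : ‖F (s, t)‖ = ‖F (s - (n:ℝ), t - (q:ℝ) * (m:ℝ))‖ :=
    (xset_norm_eq hF n m s t).symm
  have hmem : (s - (n:ℝ), t - (q:ℝ) * (m:ℝ)) ∈ Set.Icc (0:ℝ) 1 ×ˢ Set.Icc (0:ℝ) (q:ℝ) := by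
    constructor
    · constructor
      · have := Int.floor_le s; simp only [hn]; linarith
      · have := Int.lt_floor_add_one s; simp only [hn]; linarith
    · have h2 : ((m:ℝ)) ≤ t / (q:ℝ) := Int.floor_le _
      have h3 : t / (q:ℝ) < (m:ℝ) + 1 := Int.lt_floor_add_one _
      have h4 : (m:ℝ) * (q:ℝ) ≤ t := by
        rw [← le_div_iff₀ hq']; exact h2
      have h5 : t < ((m:ℝ) + 1) * (q:ℝ) := by
        rw [← div_lt_iff₀ hq']; exact h3
      simp only [Set.mem_Icc]
      constructor <;> nlinarith
  calc ‖F (s, t)‖ = ‖F (s - (n:ℝ), t - (q:ℝ) * (m:ℝ))‖ := h1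
    _ ≤ C := hC _ hmem
    _ ≤ max C 0 := le_max_left _ _


set_option maxHeartbeats 1000000 in
lemma master {q a : ℤ} (hq : 0 < q) (σ : ℝ × ℝ → ℂ)
    (hσsum : ∀ x : ℝ × ℝ, Summable fun p : ℤ × ℤ => ‖σ (x.1 - (p.1 : ℝ), x.2 - (p.2 : ℝ))‖ ^ 2)
    (hσnorm : ∀ s t : ℝ,
      HasSum (fun p : ℤ × ℤ => ‖σ (s - (p.1 : ℝ), t - (q : ℝ) * (p.2 : ℝ))‖ ^ 2) 1)
    {F G : ℝ × ℝ → ℂ} (hF : F ∈ Xset q a) (hG : G ∈ Xset q a) (s t : ℝ) :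
    HasSum (fun p : ℤ × ℤ =>
        conj (σ (s - (p.1 : ℝ), t - (p.2 : ℝ)) * F (s - (p.1 : ℝ), t - (p.2 : ℝ))) *
          (σ (s - (p.1 : ℝ), t - (p.2 : ℝ)) * G (s - (p.1 : ℝ), t - (p.2 : ℝ))))
      (∑ k ∈ Finset.range q.toNat, conj (F (s, t - (k : ℝ))) * G (s, t - (k : ℝ))) := by
  set n := q.toNat with hn
  haveI : NeZero n := ⟨by omega⟩
  have hnq : ((n : ℤ)) = q := Int.toNat_of_nonneg hq.le
  set g : ℤ × ℤ → ℂ := fun p =>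
    conj (σ (s - (p.1 : ℝ), t - (p.2 : ℝ)) * F (s - (p.1 : ℝ), t - (p.2 : ℝ))) *
      (σ (s - (p.1 : ℝ), t - (p.2 : ℝ)) * G (s - (p.1 : ℝ), t - (p.2 : ℝ))) with hg
  -- summability of g
  obtain ⟨MF, hMF0, hMF⟩ := xset_bounded hq hF
  obtain ⟨MG, hMG0, hMG⟩ := xset_bounded hq hG
  have hgsummable : Summable g := by
    apply Summable.of_norm_bounded
      (g := fun p : ℤ × ℤ => ‖σ (s - (p.1 : ℝ), t - (p.2 : ℝ))‖ ^ 2 * (MF * MG))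
      ((hσsum (s, t)).mul_right _)
    · intro p
      rw [hg]
      simp only [norm_mul, RCLike.norm_conj]
      calc ‖σ (s - (p.1:ℝ), t - (p.2:ℝ))‖ * ‖F (s - (p.1:ℝ), t - (p.2:ℝ))‖ *
            (‖σ (s - (p.1:ℝ), t - (p.2:ℝ))‖ * ‖G (s - (p.1:ℝ), t - (p.2:ℝ))‖)
          = ‖σ (s - (p.1:ℝ), t - (p.2:ℝ))‖ ^ 2 *
            (‖F (s - (p.1:ℝ), t - (p.2:ℝ))‖ * ‖G (s - (p.1:ℝ), t - (p.2:ℝ))‖) := by ring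
        _ ≤ ‖σ (s - (p.1:ℝ), t - (p.2:ℝ))‖ ^ 2 * (MF * MG) := by
            apply mul_le_mul_of_nonneg_left _ (by positivity)
            exact mul_le_mul (hMF _) (hMG _) (norm_nonneg _) hMF0
  -- the reindexing equivalence
  set ψ : Fin n × (ℤ × ℤ) ≃ ℤ × ℤ :=
    (Equiv.prodComm (Fin n) (ℤ × ℤ)).trans ((Equiv.prodAssoc ℤ ℤ (Fin n)).trans
      ((Equiv.refl ℤ).prodCongr (Int.divModEquiv n).symm)) with hψ
  have hψval : ∀ (k : Fin n) (pm : ℤ × ℤ), ψ (k, pm) = (pm.1, pm.2 * (n : ℤ) + (k.val : ℤ)) := by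
    intro k pm
    simp [hψ, Int.divModEquiv]
  -- slicewise HasSum
  have hslice : ∀ k : Fin n,
      HasSum (fun pm : ℤ × ℤ => g (ψ (k, pm)))
        (conj (F (s, t - (k.val : ℝ))) * G (s, t - (k.val : ℝ))) := by
    intro k
    have hkey : ∀ pm : ℤ × ℤ, g (ψ (k, pm)) =
        ((‖σ (s - (pm.1 : ℝ), (t - (k.val : ℝ)) - (q : ℝ) * (pm.2 : ℝ))‖ ^ 2 : ℝ) : ℂ) *
          (conj (F (s, t - (k.val : ℝ))) * G (s, t - (k.val : ℝ))) := by
      intro pm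
      rw [hψval k pm, hg]
      have harg : t - ((pm.2 * (n : ℤ) + (k.val : ℤ) : ℤ) : ℝ)
          = (t - (k.val : ℝ)) - (q : ℝ) * (pm.2 : ℝ) := by
        rw [← hnq]; push_cast; ring
      simp only [harg]
      have hσpart : conj (σ (s - (pm.1 : ℝ), (t - (k.val : ℝ)) - (q : ℝ) * (pm.2 : ℝ))) *
          σ (s - (pm.1 : ℝ), (t - (k.val : ℝ)) - (q : ℝ) * (pm.2 : ℝ))
          = ((‖σ (s - (pm.1 : ℝ), (t - (k.val : ℝ)) - (q : ℝ) * (pm.2 : ℝ))‖ ^ 2 : ℝ) : ℂ) := by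
        rw [← Complex.normSq_eq_conj_mul_self, Complex.normSq_eq_norm_sq]
      have hFG := xset_pair hF hG pm.1 pm.2 (k.val : ℤ) s t
      push_cast at hFG
      calc conj (σ _ * F (s - (pm.1:ℝ), (t - (k.val:ℝ)) - (q:ℝ)*(pm.2:ℝ))) *
            (σ _ * G (s - (pm.1:ℝ), (t - (k.val:ℝ)) - (q:ℝ)*(pm.2:ℝ)))
          = (conj (σ (s - (pm.1:ℝ), (t - (k.val:ℝ)) - (q:ℝ)*(pm.2:ℝ))) *
              σ (s - (pm.1:ℝ), (t - (k.val:ℝ)) - (q:ℝ)*(pm.2:ℝ))) *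
            (conj (F (s - (pm.1:ℝ), (t - (k.val:ℝ)) - (q:ℝ)*(pm.2:ℝ))) *
              G (s - (pm.1:ℝ), (t - (k.val:ℝ)) - (q:ℝ)*(pm.2:ℝ))) := by
            rw [map_mul]; ring
        _ = _ := by rw [hσpart, hFG]
    rw [funext hkey]
    have h1 := (hσnorm s (t - (k.val : ℝ))).mapL Complex.ofRealCLM
    have h2 := h1.mul_right (conj (F (s, t - (k.val : ℝ))) * G (s, t - (k.val : ℝ)))
    simpa using h2
  -- put it together
  have hψsummable : Summable (fun x : Fin n × (ℤ × ℤ) => g (ψ x)) :=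
    (ψ.summable_iff).2 hgsummable
  have htsum : ∑' x : Fin n × (ℤ × ℤ), g (ψ x)
      = ∑ k ∈ Finset.range n, conj (F (s, t - (k : ℝ))) * G (s, t - (k : ℝ)) := by
    rw [Summable.tsum_prod' hψsummable (fun k => (hslice k).summable)]
    have : ∀ k : Fin n, ∑' pm : ℤ × ℤ, g (ψ (k, pm))
        = conj (F (s, t - (k.val : ℝ))) * G (s, t - (k.val : ℝ)) :=
      fun k => (hslice k).tsum_eq
    rw [tsum_congr this, tsum_fintype]
    exact Fin.sum_univ_eq_sum_range (fun k => conj (F (s, t - (k : ℝ))) * G (s, t - (k : ℝ))) n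
  have := hψsummable.hasSum
  rw [htsum] at this
  exact (ψ.hasSum_iff (a := ∑ k ∈ Finset.range n, conj (F (s, t - (k:ℝ))) * G (s, t - (k:ℝ)))).1 this

lemma masterR {q a : ℤ} (hq : 0 < q) (σ : ℝ × ℝ → ℂ)
    (hσsum : ∀ x : ℝ × ℝ, Summable fun p : ℤ × ℤ => ‖σ (x.1 - (p.1 : ℝ), x.2 - (p.2 : ℝ))‖ ^ 2)
    (hσnorm : ∀ s t : ℝ,
      HasSum (fun p : ℤ × ℤ => ‖σ (s - (p.1 : ℝ), t - (q : ℝ) * (p.2 : ℝ))‖ ^ 2) 1)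
    {F : ℝ × ℝ → ℂ} (hF : F ∈ Xset q a) (s t : ℝ) :
    HasSum (fun p : ℤ × ℤ =>
        ‖σ (s - (p.1 : ℝ), t - (p.2 : ℝ)) * F (s - (p.1 : ℝ), t - (p.2 : ℝ))‖ ^ 2)
      (∑ k ∈ Finset.range q.toNat, ‖F (s, t - (k : ℝ))‖ ^ 2) := by
  have hre : ∀ z : ℂ, Complex.reCLM (conj z * z) = ‖z‖ ^ 2 := fun z => by
    rw [Complex.reCLM_apply, ← Complex.normSq_eq_conj_mul_self, Complex.normSq_eq_norm_sq]
    exact Complex.ofReal_re _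
  have h := (master hq σ hσsum hσnorm hF hF s t).mapL Complex.reCLM
  have h1 : (fun p : ℤ × ℤ => Complex.reCLM
      (conj (σ (s - (p.1 : ℝ), t - (p.2 : ℝ)) * F (s - (p.1 : ℝ), t - (p.2 : ℝ))) *
        (σ (s - (p.1 : ℝ), t - (p.2 : ℝ)) * F (s - (p.1 : ℝ), t - (p.2 : ℝ)))))
      = fun p : ℤ × ℤ =>
        ‖σ (s - (p.1 : ℝ), t - (p.2 : ℝ)) * F (s - (p.1 : ℝ), t - (p.2 : ℝ))‖ ^ 2 :=
    funext fun p => hre _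
  have h2 : Complex.reCLM
      (∑ k ∈ Finset.range q.toNat, conj (F (s, t - (k : ℝ))) * F (s, t - (k : ℝ)))
      = ∑ k ∈ Finset.range q.toNat, ‖F (s, t - (k : ℝ))‖ ^ 2 := by
    rw [map_sum]
    exact Finset.sum_congr rfl fun k _ => hre _
  rw [h1, h2] at h
  exact h

/-- The "scaling function" theorem: if σ ∈ Ξ has ℤ×qℤ-periodization of |σ|²
identically 1 and satisfies the scaling relation σ(Ax) = m̃(x)σ(x) with
m̃ ∈ X(q,(1-d₁d₂)a), then R(F) = σF is an injective C(𝕋²)-module homomorphism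
from X(q,a) into Ξ with ⟨R(F),R(G)⟩_A = ⟨F,G⟩_A. -/
theorem stmt18 (q a d₁ d₂ : ℤ) (hq : 0 < q) (hd₁ : 1 < |d₁|) (hd₂ : 1 < |d₂|)
    (σ : ℝ × ℝ → ℂ) (hσΞ : InXi2 σ)
    (hσnorm : ∀ s t : ℝ,
      HasSum (fun p : ℤ × ℤ => ‖σ (s - (p.1 : ℝ), t - (q : ℝ) * (p.2 : ℝ))‖ ^ 2) 1)
    (mt : ℝ × ℝ → ℂ) (hmt : mt ∈ Xset q ((1 - d₁ * d₂) * a))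
    (hscal : ∀ s t : ℝ, σ ((d₁ : ℝ) * s, (d₂ : ℝ) * t) = mt (s, t) * σ (s, t)) :
    -- R maps X(q,a) into Ξ
    (∀ F ∈ Xset q a, InXi2 (fun x => σ x * F x)) ∧
    -- R is additive
    (∀ F ∈ Xset q a, ∀ G ∈ Xset q a,
      (fun x => σ x * (F + G) x) = (fun x => σ x * F x) + fun x => σ x * G x) ∧
    -- R is a C(𝕋²)-module map
    (∀ F ∈ Xset q a, ∀ f, PerC f →
      (fun x => σ x * (f x * F x)) = fun x => f x * (σ x * F x)) ∧
    -- R is injective on X(q,a)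
    (∀ F ∈ Xset q a, ∀ G ∈ Xset q a,
      (fun x => σ x * F x) = (fun x => σ x * G x) → F = G) ∧
    -- R preserves the C(𝕋²)-valued inner products
    (∀ F ∈ Xset q a, ∀ G ∈ Xset q a, ∀ s t : ℝ,
      innerA2 (fun x => σ x * F x) (fun x => σ x * G x) (s, t) =
        ∑ k ∈ Finset.range q.toNat, conj (F (s, t - (k : ℝ))) * G (s, t - (k : ℝ))) := by
  have hσsum := hσΞ.2.2.1
  refine ⟨?_, ?_, ?_, ?_, ?_⟩
  · intro F hF
    obtain ⟨MF, hMF0, hMF⟩ := xset_bounded hq hF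
    obtain ⟨Mσ, hMσ⟩ := hσΞ.2.1
    have hval : ∀ x : ℝ × ℝ, perSum2 (fun y => σ y * F y) x
        = ∑ k ∈ Finset.range q.toNat, ‖F (x.1, x.2 - (k : ℝ))‖ ^ 2 :=
      fun x => (masterR hq σ hσsum hσnorm hF x.1 x.2).tsum_eq
    refine ⟨hσΞ.1.mul hF.1, ⟨Mσ * MF, ?_⟩, ?_, ⟨(q.toNat : ℝ) * MF ^ 2, ?_⟩, ?_⟩
    · intro x
      rw [norm_mul]
      exact mul_le_mul (hMσ x) (hMF x) (norm_nonneg _) ((norm_nonneg _).trans (hMσ x))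
    · intro x
      exact (masterR hq σ hσsum hσnorm hF x.1 x.2).summable
    · intro x
      rw [hval x]
      calc ∑ k ∈ Finset.range q.toNat, ‖F (x.1, x.2 - (k:ℝ))‖ ^ 2
          ≤ ∑ _k ∈ Finset.range q.toNat, MF ^ 2 :=
            Finset.sum_le_sum fun k _ => pow_le_pow_left₀ (norm_nonneg _) (hMF _) 2
        _ = (q.toNat : ℝ) * MF ^ 2 := by
            rw [Finset.sum_const, Finset.card_range, nsmul_eq_mul]
    · have heq : perSum2 (fun y => σ y * F y)
          = fun x : ℝ × ℝ => ∑ k ∈ Finset.range q.toNat, ‖F (x.1, x.2 - (k:ℝ))‖ ^ 2 :=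
        funext hval
      rw [heq]
      apply continuous_finset_sum
      intro k _
      have hc : Continuous fun x : ℝ × ℝ => F (x.1, x.2 - (k : ℝ)) :=
        hF.1.comp (continuous_fst.prodMk (continuous_snd.sub continuous_const))
      exact (hc.norm).pow 2
  · intro F hF G hG
    funext x
    simp [mul_add]
  · intro F hF f hf
    funext x
    ring
  · intro F hF G hG hEq
    have hH : (fun x : ℝ × ℝ => F x - G x) ∈ Xset q a := by
      refine ⟨hF.1.sub hG.1, fun s t => ?_, fun s t => ?_⟩
      · simp only []
        rw [hF.2.1, hG.2.1]
      · simp only []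
        rw [hF.2.2, hG.2.2]
        ring
    funext x
    obtain ⟨s, t⟩ := x
    have hhs := masterR hq σ hσsum hσnorm hH s t
    have h0 : (fun p : ℤ × ℤ =>
        ‖σ (s - (p.1:ℝ), t - (p.2:ℝ)) *
          (F (s - (p.1:ℝ), t - (p.2:ℝ)) - G (s - (p.1:ℝ), t - (p.2:ℝ)))‖ ^ 2)
        = fun _ : ℤ × ℤ => (0:ℝ) := by
      funext p
      have hz := congrFun hEq (s - (p.1:ℝ), t - (p.2:ℝ))
      rw [mul_sub, hz, sub_self]
      simp
    rw [h0] at hhs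
    have hsum0 : ∑ k ∈ Finset.range q.toNat,
        ‖F (s, t - (k:ℝ)) - G (s, t - (k:ℝ))‖ ^ 2 = 0 :=
      (hasSum_zero.unique hhs).symm
    have hterm := (Finset.sum_eq_zero_iff_of_nonneg
      (fun k _ => by positivity)).1 hsum0 0
      (Finset.mem_range.2 (by omega))
    have : F (s, t - ((0:ℕ):ℝ)) = G (s, t - ((0:ℕ):ℝ)) := by
      have h1 : ‖F (s, t - ((0:ℕ):ℝ)) - G (s, t - ((0:ℕ):ℝ))‖ = 0 := by
        have := hterm
        nlinarith [norm_nonneg (F (s, t - ((0:ℕ):ℝ)) - G (s, t - ((0:ℕ):ℝ)))]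
      rw [← sub_eq_zero]
      exact norm_eq_zero.1 h1
    simpa using this
  · intro F hF G hG s t
    exact (master hq σ hσsum hσnorm hF hG s t).tsum_eq
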